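/- Let G be a group with finite generating set S whose Cayley graph Γ has only finitely many extended cone types t₀, t₁, …, t_q, where t₀ is the type of C̄(1). For n ∈ ℕ and 0 ≤ j ≤ q let a_{n,j} be the number of g ∈ G with |g| = n whose extended cone C̄(g) has type t_j, let m_j = m(t_j) and n_{i,j} = n(t_i, t_j). Then for every n > 0 and every j ≠ 0, m_j · a_{n,j} = Σ_{i=0}^{q} n_{i,j} · a_{n−1,i}. -/

import Mathlib

variable {G : Type*} [Group G]

noncomputable def wordLength (S : Set G) (g : G) : ℕ :=
  sInf {n | ∃ w : List G, (∀ x ∈ w, x ∈ S ∪ S⁻¹) ∧ w.length = n ∧ w.prod = g}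

def cayley (S : Set G) : SimpleGraph G where
  Adj g h := g ≠ h ∧ h * g⁻¹ ∈ S ∪ S⁻¹
  symm := by
    constructor
    rintro g h ⟨hne, hmem⟩
    refine ⟨hne.symm, ?_⟩
    have key : g * h⁻¹ = (h * g⁻¹)⁻¹ := by group
    rw [key]
    rcases hmem with h1 | h1
    · exact Or.inr (by simpa [Set.mem_inv] using h1)
    · exact Or.inl (by simpa [Set.mem_inv] using h1)
  loopless := ⟨fun g h => h.1 rfl⟩

def coneSet (S : Set G) (g : G) : Set G :=
  {h | wordLength S h = wordLength S g + (cayley S).dist g h}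

lemma self_mem_coneSet (S : Set G) (g : G) : g ∈ coneSet S g := by
  simp [coneSet]

/-- The cone `C(g)` as a subgraph of the Cayley graph. -/
def coneSubgraph (S : Set G) (g : G) : (cayley S).Subgraph where
  verts := coneSet S g
  Adj a b := a ∈ coneSet S g ∧ b ∈ coneSet S g ∧ (cayley S).Adj a b
  adj_sub h := h.2.2
  edge_vert h := h.1
  symm := ⟨by rintro a b ⟨ha, hb, hab⟩; exact ⟨hb, ha, hab.symm⟩⟩

/-- The extended cone `C̄(g)` as a subgraph of the Cayley graph: the cone together with,
for each vertex `h` of the cone and each tangent edge `{h,k}` of the Cayley graph,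
the vertex `k` and the edge `{h,k}`. -/
def extConeSubgraph (S : Set G) (g : G) : (cayley S).Subgraph where
  verts := coneSet S g ∪
    {k | ∃ h ∈ coneSet S g, (cayley S).Adj h k ∧ wordLength S h = wordLength S k}
  Adj a b := (cayley S).Adj a b ∧
    ((a ∈ coneSet S g ∧ b ∈ coneSet S g) ∨
      (wordLength S a = wordLength S b ∧ (a ∈ coneSet S g ∨ b ∈ coneSet S g)))
  adj_sub h := h.1
  edge_vert := by
    rintro a b ⟨hadj, hc | ⟨ht, hc⟩⟩
    · exact Or.inl hc.1
    · rcases hc with hc | hc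
      · exact Or.inl hc
      · exact Or.inr ⟨b, hc, hadj.symm, ht.symm⟩
  symm := by
    constructor
    rintro a b ⟨hadj, hc | ⟨ht, hc⟩⟩
    · exact ⟨hadj.symm, Or.inl ⟨hc.2, hc.1⟩⟩
    · exact ⟨hadj.symm, Or.inr ⟨ht.symm, hc.symm⟩⟩

lemma self_mem_extCone (S : Set G) (g : G) : g ∈ (extConeSubgraph S g).verts :=
  Set.mem_union_left _ (self_mem_coneSet S g)

/-- Strong equivalence of extended cones: a graph isomorphism of the extended cones sending
root to root and cone onto cone. -/
noncomputable def StrongEquiv (S : Set G) (g h : G) : Prop :=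
  ∃ T : (extConeSubgraph S g).coe ≃g (extConeSubgraph S h).coe,
    ((T ⟨g, self_mem_extCone S g⟩ : (extConeSubgraph S h).verts) : G) = h ∧
    ∀ x : (extConeSubgraph S g).verts,
      ((x : G) ∈ coneSet S g ↔ ((T x : (extConeSubgraph S h).verts) : G) ∈ coneSet S h)

/-- Weak equivalence of cones: a root-preserving graph isomorphism of the cones. -/
noncomputable def WeakEquiv (S : Set G) (g h : G) : Prop :=
  ∃ T : (cayley S).induce (coneSet S g) ≃g (cayley S).induce (coneSet S h),
    ((T ⟨g, self_mem_coneSet S g⟩ : coneSet S h) : G) = h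

/-- `m(C̄(g))`: the number of norm decreasing edges at `g`. -/
noncomputable def mval (S : Set G) (g : G) : ℕ :=
  Set.ncard {h | (cayley S).Adj g h ∧ wordLength S g = wordLength S h + 1}

/-- `n(C̄(g),C̄(h))`: the number of norm increasing edges `(g,h')` at `g` with
`C̄(h')` strongly equivalent to `C̄(h)`. -/
noncomputable def nval (S : Set G) (g h : G) : ℕ :=
  Set.ncard {h' | (cayley S).Adj g h' ∧ wordLength S h' = wordLength S g + 1 ∧
    StrongEquiv S h' h}

section Basics

variable {S : Set G}

lemma wordLength_spec (hgen : Subgroup.closure S = ⊤) (g : G) :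
    ∃ w : List G, (∀ x ∈ w, x ∈ S ∪ S⁻¹) ∧ w.length = wordLength S g ∧ w.prod = g := by
  have hmem : g ∈ Submonoid.closure (S ∪ S⁻¹) := by
    have h1 : g ∈ (Subgroup.closure S).toSubmonoid := by
      rw [hgen]; exact Subgroup.mem_top g
    rwa [Subgroup.closure_toSubmonoid] at h1
  obtain ⟨w, hw, hp⟩ := Submonoid.exists_list_of_mem_closure hmem
  have hne : {n | ∃ w : List G, (∀ x ∈ w, x ∈ S ∪ S⁻¹) ∧ w.length = n ∧ w.prod = g}.Nonempty :=
    ⟨w.length, w, hw, rfl, hp⟩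
  exact Nat.sInf_mem hne

lemma wordLength_le {w : List G} (hw : ∀ x ∈ w, x ∈ S ∪ S⁻¹) (g : G) (hp : w.prod = g) :
    wordLength S g ≤ w.length :=
  Nat.sInf_le ⟨w, hw, rfl, hp⟩

lemma wordLength_le_adj (hgen : Subgroup.closure S = ⊤) {g h : G} (hadj : (cayley S).Adj g h) :
    wordLength S h ≤ wordLength S g + 1 := by
  obtain ⟨w, hw, hl, hp⟩ := wordLength_spec hgen g
  have := wordLength_le (w := (h * g⁻¹) :: w)
    (by intro x hx; rcases List.mem_cons.1 hx with rfl | hx; exacts [(id hadj : g ≠ h ∧ h * g⁻¹ ∈ S ∪ S⁻¹).2, hw x hx]) h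
    (by simp [hp, mul_assoc])
  simpa [hl, Nat.add_comm] using this

lemma exists_walk_words (hgen : Subgroup.closure S = ⊤) :
    ∀ (w : List G), (∀ x ∈ w, x ∈ S ∪ S⁻¹) → ∀ g : G,
      ∃ p : (cayley S).Walk g (w.prod * g), p.length ≤ w.length := by
  intro w
  induction w with
  | nil => intro _ g; exact ⟨SimpleGraph.Walk.nil.copy rfl (by simp), by simp only [SimpleGraph.Walk.length_copy, SimpleGraph.Walk.length_nil, List.length_nil, le_refl]⟩
  | cons a t ih =>
    intro hw g
    obtain ⟨p, hp⟩ := ih (fun x hx => hw x (List.mem_cons_of_mem a hx)) g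
    by_cases ha : a = 1
    · exact ⟨p.copy rfl (by simp [ha]), (SimpleGraph.Walk.length_copy ..).trans_le (by simpa using hp.trans (Nat.le_succ _))⟩
    · have hadj : (cayley S).Adj (t.prod * g) (a * (t.prod * g)) := by
        show t.prod * g ≠ a * (t.prod * g) ∧ _
        constructor
        · intro h; exact ha (mul_eq_right.mp h.symm)
        · have : a * (t.prod * g) * (t.prod * g)⁻¹ = a := by group
          rw [this]; exact hw a List.mem_cons_self
      refine ⟨(p.concat hadj).copy rfl (by simp [mul_assoc]), ?_⟩
      exact (SimpleGraph.Walk.length_copy ..).trans_le (by simpa [SimpleGraph.Walk.length_concat] using Nat.add_le_add_right hp 1)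

lemma cayley_reachable (hgen : Subgroup.closure S = ⊤) (g h : G) :
    (cayley S).Reachable g h := by
  obtain ⟨w, hw, hl, hp⟩ := wordLength_spec hgen (h * g⁻¹)
  obtain ⟨p, _⟩ := exists_walk_words hgen w hw g
  exact ⟨p.copy rfl (by rw [hp]; group)⟩

lemma cayley_connected (hgen : Subgroup.closure S = ⊤) : (cayley S).Connected := by
  rw [SimpleGraph.connected_iff]
  exact ⟨fun g h => cayley_reachable hgen g h, ⟨1⟩⟩

lemma wordLength_le_walk (hgen : Subgroup.closure S = ⊤) {g h : G} (p : (cayley S).Walk g h) :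
    wordLength S h ≤ wordLength S g + p.length := by
  induction p with
  | nil => simp
  | @cons u v w hadj q ih =>
    have h1 := wordLength_le_adj hgen hadj
    rw [SimpleGraph.Walk.length_cons]
    omega

lemma wordLength_le_dist (hgen : Subgroup.closure S = ⊤) (g h : G) :
    wordLength S h ≤ wordLength S g + (cayley S).dist g h := by
  obtain ⟨p, hp⟩ := (cayley_reachable hgen g h).exists_walk_length_eq_dist
  simpa [hp] using wordLength_le_walk hgen p

lemma dist_le_of_hom {V W : Type*} {A : SimpleGraph V} {B : SimpleGraph W} (f : A →g B)
    {a b : V} (h : A.Reachable a b) : B.dist (f a) (f b) ≤ A.dist a b := by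
  obtain ⟨p, hp⟩ := h.exists_walk_length_eq_dist
  simpa [hp] using B.dist_le (p.map f)

lemma iso_dist_eq {V W : Type*} {A : SimpleGraph V} {B : SimpleGraph W} (f : A ≃g B)
    (a b : V) : B.dist (f a) (f b) = A.dist a b := by
  by_cases h : A.Reachable a b
  · refine le_antisymm (dist_le_of_hom f.toHom h) ?_
    have h2 : B.Reachable (f a) (f b) := h.map f.toHom
    simpa using dist_le_of_hom f.symm.toHom h2
  · have h2 : ¬ B.Reachable (f a) (f b) := by
      intro hr
      exact h (by simpa using hr.map f.symm.toHom)
    rw [SimpleGraph.dist_eq_zero_of_not_reachable h, SimpleGraph.dist_eq_zero_of_not_reachable h2]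

end Basics
section Cone

variable {S : Set G}

lemma cayley_dist_triangle (hgen : Subgroup.closure S = ⊤) (g x y : G) :
    (cayley S).dist g y ≤ (cayley S).dist g x + (cayley S).dist x y :=
  (cayley_connected hgen).dist_triangle

lemma adj_incr_mem_cone {g h : G} (hadj : (cayley S).Adj g h)
    (hw : wordLength S h = wordLength S g + 1) : h ∈ coneSet S g := by
  show wordLength S h = wordLength S g + (cayley S).dist g h
  rw [SimpleGraph.dist_eq_one_iff_adj.mpr hadj]
  exact hw

lemma cone_trans (hgen : Subgroup.closure S = ⊤) {g x y : G} (hx : x ∈ coneSet S g)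
    (hy : y ∈ coneSet S x) :
    y ∈ coneSet S g ∧ (cayley S).dist g y = (cayley S).dist g x + (cayley S).dist x y := by
  have hx' : wordLength S x = wordLength S g + (cayley S).dist g x := hx
  have hy' : wordLength S y = wordLength S x + (cayley S).dist x y := hy
  have h2 := wordLength_le_dist hgen g y
  have h3 := cayley_dist_triangle hgen g x y
  have goal2 : (cayley S).dist g y = (cayley S).dist g x + (cayley S).dist x y := by omega
  exact ⟨by show wordLength S y = _; omega, goal2⟩

lemma coneSet_subset (hgen : Subgroup.closure S = ⊤) {g x : G} (hx : x ∈ coneSet S g) :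
    coneSet S x ⊆ coneSet S g := fun _ hy => (cone_trans hgen hx hy).1

lemma extCone_mono (hgen : Subgroup.closure S = ⊤) {g h' : G} (hh : h' ∈ coneSet S g) :
    extConeSubgraph S h' ≤ extConeSubgraph S g := by
  constructor
  · rintro x (hx | ⟨y, hy, hadj, ht⟩)
    · exact Or.inl (coneSet_subset hgen hh hx)
    · exact Or.inr ⟨y, coneSet_subset hgen hh hy, hadj, ht⟩
  · rintro a b ⟨hadj, hc | ⟨ht, hc⟩⟩
    · exact ⟨hadj, Or.inl ⟨coneSet_subset hgen hh hc.1, coneSet_subset hgen hh hc.2⟩⟩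
    · exact ⟨hadj, Or.inr ⟨ht, hc.imp (fun h => coneSet_subset hgen hh h)
        (fun h => coneSet_subset hgen hh h)⟩⟩

lemma cone_mem_verts {g x : G} (hx : x ∈ coneSet S g) : x ∈ (extConeSubgraph S g).verts :=
  Or.inl hx

lemma cone_walk (hgen : Subgroup.closure S = ⊤) {g : G} :
    ∀ (m : ℕ) (x : G) (hx : x ∈ coneSet S g), (cayley S).dist g x = m →
    ∃ p : ((extConeSubgraph S g).coe).Walk ⟨g, self_mem_extCone S g⟩ ⟨x, cone_mem_verts hx⟩,
      p.length = m := by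
  intro m
  induction m with
  | zero =>
    intro x hx h0
    have hgx : g = x := ((cayley_reachable hgen g x).dist_eq_zero_iff).mp h0
    subst hgx
    exact ⟨SimpleGraph.Walk.nil, rfl⟩
  | succ m ih =>
    intro x hx hm
    obtain ⟨r, hr⟩ := (cayley_reachable hgen x g).exists_walk_length_eq_dist
    rw [SimpleGraph.dist_comm, hm] at hr
    cases r with
    | nil => simp at hr
    | @cons _ v _ hadj q =>
      rw [SimpleGraph.Walk.length_cons] at hr
      have hq : q.length = m := by omega
      have hdv_le : (cayley S).dist g v ≤ m := by
        have := (cayley S).dist_le q.reverse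
        rw [SimpleGraph.Walk.length_reverse, hq] at this
        exact this
      have hd1 : (cayley S).dist g x ≤ (cayley S).dist g v + 1 := by
        have h1 : (cayley S).dist v x = 1 := SimpleGraph.dist_eq_one_iff_adj.mpr hadj.symm
        have := cayley_dist_triangle hgen g v x
        omega
      have hdv : (cayley S).dist g v = m := by omega
      have hwx : wordLength S x = wordLength S g + (m + 1) := by
        have hx' : wordLength S x = wordLength S g + (cayley S).dist g x := hx
        omega
      have hwv_le : wordLength S v ≤ wordLength S g + m := by
        have := wordLength_le_dist hgen g v; omega
      have hwv_ge : wordLength S x ≤ wordLength S v + 1 := wordLength_le_adj hgen hadj.symm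
      have hv : v ∈ coneSet S g := by
        show wordLength S v = wordLength S g + (cayley S).dist g v
        omega
      obtain ⟨p, hp⟩ := ih v hv hdv
      have hedge : ((extConeSubgraph S g).coe).Adj ⟨v, cone_mem_verts hv⟩ ⟨x, cone_mem_verts hx⟩ := by
        show (extConeSubgraph S g).Adj v x
        exact ⟨hadj.symm, Or.inl ⟨hv, hx⟩⟩
      exact ⟨p.concat hedge, by rw [SimpleGraph.Walk.length_concat, hp]⟩

lemma coe_dist_ge (hgen : Subgroup.closure S = ⊤) {g : G} {u v : (extConeSubgraph S g).verts}
    (h : ((extConeSubgraph S g).coe).Reachable u v) :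
    (cayley S).dist (u : G) (v : G) ≤ ((extConeSubgraph S g).coe).dist u v :=
  dist_le_of_hom ((extConeSubgraph S g).hom) h

lemma cone_coe_reach (hgen : Subgroup.closure S = ⊤) {g x : G} (hx : x ∈ coneSet S g) :
    ((extConeSubgraph S g).coe).Reachable ⟨g, self_mem_extCone S g⟩ ⟨x, cone_mem_verts hx⟩ := by
  obtain ⟨p, _⟩ := cone_walk hgen ((cayley S).dist g x) x hx rfl
  exact ⟨p⟩

lemma cone_coe_dist (hgen : Subgroup.closure S = ⊤) {g x : G} (hx : x ∈ coneSet S g) :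
    ((extConeSubgraph S g).coe).dist ⟨g, self_mem_extCone S g⟩ ⟨x, cone_mem_verts hx⟩ =
      (cayley S).dist g x := by
  obtain ⟨p, hp⟩ := cone_walk hgen ((cayley S).dist g x) x hx rfl
  refine le_antisymm (hp ▸ SimpleGraph.dist_le p) (coe_dist_ge hgen ⟨p⟩)

end Cone
section Char

variable {S : Set G}

lemma cone_coe_dist' (hgen : Subgroup.closure S = ⊤) {g x : G} (hx : x ∈ coneSet S g)
    (hgv : g ∈ (extConeSubgraph S g).verts) (hxv : x ∈ (extConeSubgraph S g).verts) :
    ((extConeSubgraph S g).coe).dist ⟨g, hgv⟩ ⟨x, hxv⟩ = (cayley S).dist g x :=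
  cone_coe_dist hgen hx

lemma coe_dist_le_sub (hgen : Subgroup.closure S = ⊤) {g h x : G} (hh : h ∈ coneSet S g)
    (hx : x ∈ coneSet S h) (hhv : h ∈ (extConeSubgraph S g).verts)
    (hxv : x ∈ (extConeSubgraph S g).verts) :
    ((extConeSubgraph S g).coe).Reachable ⟨h, hhv⟩ ⟨x, hxv⟩ ∧
    ((extConeSubgraph S g).coe).dist ⟨h, hhv⟩ ⟨x, hxv⟩ ≤ (cayley S).dist h x := by
  obtain ⟨p, hp⟩ := cone_walk hgen ((cayley S).dist h x) x hx rfl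
  let f := SimpleGraph.Subgraph.inclusion (extCone_mono hgen hh)
  let p' := ((p.map f).copy (Subtype.ext rfl) (Subtype.ext rfl) :
    ((extConeSubgraph S g).coe).Walk ⟨h, hhv⟩ ⟨x, hxv⟩)
  refine ⟨⟨p'⟩, ?_⟩
  have hl : p'.length = (cayley S).dist h x := by
    simp only [p', SimpleGraph.Walk.length_copy, SimpleGraph.Walk.length_map, hp]
  exact hl ▸ SimpleGraph.dist_le p'

lemma cone_char (hgen : Subgroup.closure S = ⊤) {g h : G} (hadj : (cayley S).Adj g h)
    (hincr : wordLength S h = wordLength S g + 1) {x : G}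
    (hhv : h ∈ (extConeSubgraph S g).verts) (hxv : x ∈ (extConeSubgraph S g).verts) :
    x ∈ coneSet S h ↔ x ∈ coneSet S g ∧
      ((extConeSubgraph S g).coe).Reachable ⟨h, hhv⟩ ⟨x, hxv⟩ ∧
      ((extConeSubgraph S g).coe).dist ⟨h, hhv⟩ ⟨x, hxv⟩ + 1 ≤
        ((extConeSubgraph S g).coe).dist ⟨g, self_mem_extCone S g⟩ ⟨x, hxv⟩ := by
  have hhc : h ∈ coneSet S g := adj_incr_mem_cone hadj hincr
  have hd1 : (cayley S).dist g h = 1 := SimpleGraph.dist_eq_one_iff_adj.mpr hadj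
  constructor
  · intro hx
    have hxc : x ∈ coneSet S g := (cone_trans hgen hhc hx).1
    have hdd : (cayley S).dist g x = (cayley S).dist g h + (cayley S).dist h x :=
      (cone_trans hgen hhc hx).2
    obtain ⟨hr, hub⟩ := coe_dist_le_sub hgen hhc hx hhv hxv
    refine ⟨hxc, hr, ?_⟩
    rw [cone_coe_dist' hgen hxc (self_mem_extCone S g) hxv]
    omega
  · rintro ⟨hxc, hr, hineq⟩
    have hd2 := cone_coe_dist' hgen hxc (self_mem_extCone S g) hxv
    have hlb : (cayley S).dist h x ≤ ((extConeSubgraph S g).coe).dist ⟨h, hhv⟩ ⟨x, hxv⟩ :=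
      dist_le_of_hom ((extConeSubgraph S g).hom) hr
    have hxc' : wordLength S x = wordLength S g + (cayley S).dist g x := hxc
    have hub := wordLength_le_dist hgen h x
    show wordLength S x = wordLength S h + (cayley S).dist h x
    omega

lemma tangent_char (hgen : Subgroup.closure S = ⊤) {g a b : G}
    (hav : a ∈ (extConeSubgraph S g).verts) (hbv : b ∈ (extConeSubgraph S g).verts)
    (hadj : (extConeSubgraph S g).Adj a b) (hac : a ∈ coneSet S g) :
    wordLength S a = wordLength S b ↔ (b ∈ coneSet S g →
      ((extConeSubgraph S g).coe).dist ⟨g, self_mem_extCone S g⟩ ⟨a, hav⟩ =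
      ((extConeSubgraph S g).coe).dist ⟨g, self_mem_extCone S g⟩ ⟨b, hbv⟩) := by
  by_cases hbc : b ∈ coneSet S g
  · rw [cone_coe_dist' hgen hac (self_mem_extCone S g) hav,
      cone_coe_dist' hgen hbc (self_mem_extCone S g) hbv]
    have hac' : wordLength S a = wordLength S g + (cayley S).dist g a := hac
    have hbc' : wordLength S b = wordLength S g + (cayley S).dist g b := hbc
    constructor
    · intro h _; omega
    · intro h; have := h hbc; omega
  · constructor
    · intro _ hb'; exact absurd hb' hbc
    · intro _
      rcases hadj with ⟨_, hcl | ⟨ht, _⟩⟩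
      · exact absurd hcl.2 hbc
      · exact ht

end Char
section Transfer

variable {S : Set G}

lemma iso_reach_iff {V W : Type*} {A : SimpleGraph V} {B : SimpleGraph W} (f : A ≃g B)
    {u v : V} : A.Reachable u v ↔ B.Reachable (f u) (f v) := by
  constructor
  · exact fun h => h.map f.toHom
  · intro h
    have := h.map f.symm.toHom
    simpa using this

variable (hgen : Subgroup.closure S = ⊤) {g g2 : G}
  (T : (extConeSubgraph S g).coe ≃g (extConeSubgraph S g2).coe)
  (hroot : ((T ⟨g, self_mem_extCone S g⟩ : (extConeSubgraph S g2).verts) : G) = g2)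
  (hcone : ∀ x : (extConeSubgraph S g).verts,
      ((x : G) ∈ coneSet S g ↔ ((T x : (extConeSubgraph S g2).verts) : G) ∈ coneSet S g2))

include hgen hroot hcone

lemma step_incr {h : G} (hv : h ∈ (extConeSubgraph S g).verts)
    (hadj : (cayley S).Adj g h) (hincr : wordLength S h = wordLength S g + 1) :
    (cayley S).Adj g2 ((T ⟨h, hv⟩ : (extConeSubgraph S g2).verts) : G) ∧
    wordLength S ((T ⟨h, hv⟩ : (extConeSubgraph S g2).verts) : G) = wordLength S g2 + 1 ∧
    ((T ⟨h, hv⟩ : (extConeSubgraph S g2).verts) : G) ∈ coneSet S g2 := by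
  have hhc : h ∈ coneSet S g := adj_incr_mem_cone hadj hincr
  have hkc : ((T ⟨h, hv⟩ : (extConeSubgraph S g2).verts) : G) ∈ coneSet S g2 :=
    (hcone ⟨h, hv⟩).mp hhc
  have e : ((extConeSubgraph S g).coe).Adj ⟨g, self_mem_extCone S g⟩ ⟨h, hv⟩ := by
    show (extConeSubgraph S g).Adj g h
    exact ⟨hadj, Or.inl ⟨self_mem_coneSet S g, hhc⟩⟩
  have e2 : ((extConeSubgraph S g2).coe).Adj (T ⟨g, self_mem_extCone S g⟩) (T ⟨h, hv⟩) :=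
    T.map_adj_iff.mpr e
  have hadj2 : (cayley S).Adj g2 ((T ⟨h, hv⟩ : (extConeSubgraph S g2).verts) : G) := by
    have := (extConeSubgraph S g2).adj_sub e2
    rwa [hroot] at this
  refine ⟨hadj2, ?_, hkc⟩
  have := hkc
  rw [show ((T ⟨h, hv⟩ : (extConeSubgraph S g2).verts) : G) ∈ coneSet S g2 ↔
    wordLength S _ = wordLength S g2 + (cayley S).dist g2 _ from Iff.rfl,
    SimpleGraph.dist_eq_one_iff_adj.mpr hadj2] at this
  exact this

lemma step_cone {h : G} (hv : h ∈ (extConeSubgraph S g).verts)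
    (hadj : (cayley S).Adj g h) (hincr : wordLength S h = wordLength S g + 1)
    {x : G} (hxv : x ∈ (extConeSubgraph S g).verts) (hx : x ∈ coneSet S h) :
    ((T ⟨x, hxv⟩ : (extConeSubgraph S g2).verts) : G) ∈
      coneSet S ((T ⟨h, hv⟩ : (extConeSubgraph S g2).verts) : G) := by
  obtain ⟨hadj2, hincr2, hkc⟩ := step_incr hgen T hroot hcone hv hadj hincr
  have hchar := (cone_char hgen hadj hincr hv hxv).mp hx
  obtain ⟨hxc, hr, hineq⟩ := hchar
  have hTg : T ⟨g, self_mem_extCone S g⟩ = ⟨g2, self_mem_extCone S g2⟩ := Subtype.ext hroot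
  refine (cone_char hgen hadj2 hincr2 (T ⟨h, hv⟩).2 (T ⟨x, hxv⟩).2).mpr ⟨(hcone ⟨x, hxv⟩).mp hxc, ?_, ?_⟩
  · exact (iso_reach_iff T).mp hr
  · have d1 : ((extConeSubgraph S g2).coe).dist (T ⟨h, hv⟩) (T ⟨x, hxv⟩) =
      ((extConeSubgraph S g).coe).dist ⟨h, hv⟩ ⟨x, hxv⟩ := iso_dist_eq T _ _
    have d2 : ((extConeSubgraph S g2).coe).dist ⟨g2, self_mem_extCone S g2⟩ (T ⟨x, hxv⟩) =
      ((extConeSubgraph S g).coe).dist ⟨g, self_mem_extCone S g⟩ ⟨x, hxv⟩ := by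
      rw [← hTg]; exact iso_dist_eq T _ _
    show ((extConeSubgraph S g2).coe).dist (T ⟨h, hv⟩) (T ⟨x, hxv⟩) + 1 ≤
      ((extConeSubgraph S g2).coe).dist ⟨g2, self_mem_extCone S g2⟩ (T ⟨x, hxv⟩)
    omega

lemma step_tangent {x y : G} (hxv : x ∈ (extConeSubgraph S g).verts)
    (hyv : y ∈ (extConeSubgraph S g).verts) (e : (extConeSubgraph S g).Adj x y)
    (hxc : x ∈ coneSet S g) (ht : wordLength S x = wordLength S y) :
    wordLength S ((T ⟨x, hxv⟩ : (extConeSubgraph S g2).verts) : G) =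
    wordLength S ((T ⟨y, hyv⟩ : (extConeSubgraph S g2).verts) : G) := by
  have hTg : T ⟨g, self_mem_extCone S g⟩ = ⟨g2, self_mem_extCone S g2⟩ := Subtype.ext hroot
  have e2 : (extConeSubgraph S g2).Adj ((T ⟨x, hxv⟩ : (extConeSubgraph S g2).verts) : G)
      ((T ⟨y, hyv⟩ : (extConeSubgraph S g2).verts) : G) := T.map_adj_iff.mpr e
  have hxc2 : ((T ⟨x, hxv⟩ : (extConeSubgraph S g2).verts) : G) ∈ coneSet S g2 :=
    (hcone ⟨x, hxv⟩).mp hxc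
  refine (tangent_char hgen (T ⟨x, hxv⟩).2 (T ⟨y, hyv⟩).2 e2 hxc2).mpr ?_
  intro hyc2
  have hyc : y ∈ coneSet S g := (hcone ⟨y, hyv⟩).mpr hyc2
  have de := (tangent_char hgen hxv hyv e hxc).mp ht hyc
  show ((extConeSubgraph S g2).coe).dist ⟨g2, self_mem_extCone S g2⟩ (T ⟨x, hxv⟩) =
    ((extConeSubgraph S g2).coe).dist ⟨g2, self_mem_extCone S g2⟩ (T ⟨y, hyv⟩)
  rw [← hTg, iso_dist_eq T, iso_dist_eq T]
  exact de

lemma step_verts {h : G} (hv : h ∈ (extConeSubgraph S g).verts)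
    (hadj : (cayley S).Adj g h) (hincr : wordLength S h = wordLength S g + 1)
    {x : G} (hxv : x ∈ (extConeSubgraph S g).verts) (hx : x ∈ (extConeSubgraph S h).verts) :
    ((T ⟨x, hxv⟩ : (extConeSubgraph S g2).verts) : G) ∈
      (extConeSubgraph S ((T ⟨h, hv⟩ : (extConeSubgraph S g2).verts) : G)).verts := by
  rcases hx with hx | ⟨y, hy, hadjyx, hty⟩
  · exact Or.inl (step_cone hgen T hroot hcone hv hadj hincr hxv hx)
  · have hhc : h ∈ coneSet S g := adj_incr_mem_cone hadj hincr
    have hyg : y ∈ coneSet S g := coneSet_subset hgen hhc hy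
    have hyv : y ∈ (extConeSubgraph S g).verts := Or.inl hyg
    have e : (extConeSubgraph S g).Adj y x := ⟨hadjyx, Or.inr ⟨hty, Or.inl hyg⟩⟩
    have hTyc := step_cone hgen T hroot hcone hv hadj hincr hyv hy
    have hTt := step_tangent hgen T hroot hcone hyv hxv e hyg hty
    have e2 : (extConeSubgraph S g2).Adj ((T ⟨y, hyv⟩ : (extConeSubgraph S g2).verts) : G)
        ((T ⟨x, hxv⟩ : (extConeSubgraph S g2).verts) : G) := T.map_adj_iff.mpr e
    exact Or.inr ⟨_, hTyc, (extConeSubgraph S g2).adj_sub e2, hTt⟩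

lemma step_adj {h : G} (hv : h ∈ (extConeSubgraph S g).verts)
    (hadj : (cayley S).Adj g h) (hincr : wordLength S h = wordLength S g + 1)
    {x y : G} (hxv : x ∈ (extConeSubgraph S g).verts) (hyv : y ∈ (extConeSubgraph S g).verts)
    (hxy : (extConeSubgraph S h).Adj x y) :
    (extConeSubgraph S ((T ⟨h, hv⟩ : (extConeSubgraph S g2).verts) : G)).Adj
      ((T ⟨x, hxv⟩ : (extConeSubgraph S g2).verts) : G)
      ((T ⟨y, hyv⟩ : (extConeSubgraph S g2).verts) : G) := by
  have hhc : h ∈ coneSet S g := adj_incr_mem_cone hadj hincr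
  obtain ⟨hc, hcl⟩ := hxy
  have e : (extConeSubgraph S g).Adj x y := by
    rcases hcl with ⟨hx1, hy1⟩ | ⟨ht, hone⟩
    · exact ⟨hc, Or.inl ⟨coneSet_subset hgen hhc hx1, coneSet_subset hgen hhc hy1⟩⟩
    · exact ⟨hc, Or.inr ⟨ht, hone.imp (coneSet_subset hgen hhc ·) (coneSet_subset hgen hhc ·)⟩⟩
  have e2 : (extConeSubgraph S g2).Adj ((T ⟨x, hxv⟩ : (extConeSubgraph S g2).verts) : G)
      ((T ⟨y, hyv⟩ : (extConeSubgraph S g2).verts) : G) := T.map_adj_iff.mpr e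
  refine ⟨(extConeSubgraph S g2).adj_sub e2, ?_⟩
  rcases hcl with ⟨hx1, hy1⟩ | ⟨ht, hone⟩
  · exact Or.inl ⟨step_cone hgen T hroot hcone hv hadj hincr hxv hx1,
      step_cone hgen T hroot hcone hv hadj hincr hyv hy1⟩
  · rcases hone with hx1 | hy1
    · exact Or.inr ⟨step_tangent hgen T hroot hcone hxv hyv e (coneSet_subset hgen hhc hx1) ht,
        Or.inl (step_cone hgen T hroot hcone hv hadj hincr hxv hx1)⟩
    · exact Or.inr ⟨(step_tangent hgen T hroot hcone hyv hxv e.symm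
        (coneSet_subset hgen hhc hy1) ht.symm).symm,
        Or.inr (step_cone hgen T hroot hcone hv hadj hincr hyv hy1)⟩

end Transfer
section Assemble

variable {S : Set G}

lemma hroot_symm {g g2 : G} (T : (extConeSubgraph S g).coe ≃g (extConeSubgraph S g2).coe)
    (hroot : ((T ⟨g, self_mem_extCone S g⟩ : (extConeSubgraph S g2).verts) : G) = g2) :
    ((T.symm ⟨g2, self_mem_extCone S g2⟩ : (extConeSubgraph S g).verts) : G) = g := by
  have hTg : T ⟨g, self_mem_extCone S g⟩ = ⟨g2, self_mem_extCone S g2⟩ := Subtype.ext hroot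
  have h2 : T.symm ⟨g2, self_mem_extCone S g2⟩ = ⟨g, self_mem_extCone S g⟩ := by
    rw [← hTg]; exact T.symm_apply_apply _
  rw [h2]

lemma hcone_symm {g g2 : G} (T : (extConeSubgraph S g).coe ≃g (extConeSubgraph S g2).coe)
    (hcone : ∀ x : (extConeSubgraph S g).verts,
      ((x : G) ∈ coneSet S g ↔ ((T x : (extConeSubgraph S g2).verts) : G) ∈ coneSet S g2)) :
    ∀ y : (extConeSubgraph S g2).verts,
      ((y : G) ∈ coneSet S g2 ↔ ((T.symm y : (extConeSubgraph S g).verts) : G) ∈ coneSet S g) := by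
  intro y
  have := hcone (T.symm y)
  rw [T.apply_symm_apply] at this
  exact this.symm

lemma strongEquiv_symm {g g2 : G} (h : StrongEquiv S g g2) : StrongEquiv S g2 g := by
  obtain ⟨T, hroot, hcone⟩ := h
  exact ⟨T.symm, hroot_symm T hroot, hcone_symm T hcone⟩

lemma strongEquiv_trans {g1 g2 g3 : G} (h12 : StrongEquiv S g1 g2) (h23 : StrongEquiv S g2 g3) :
    StrongEquiv S g1 g3 := by
  obtain ⟨T1, r1, c1⟩ := h12
  obtain ⟨T2, r2, c2⟩ := h23
  refine ⟨T1.trans T2, ?_, ?_⟩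
  · show ((T2 (T1 ⟨g1, _⟩) : (extConeSubgraph S g3).verts) : G) = g3
    rw [show T1 ⟨g1, self_mem_extCone S g1⟩ = ⟨g2, self_mem_extCone S g2⟩ from Subtype.ext r1]
    exact r2
  · intro x
    exact (c1 x).trans (c2 (T1 x))

lemma strong_step (hgen : Subgroup.closure S = ⊤) {g g2 : G}
    (T : (extConeSubgraph S g).coe ≃g (extConeSubgraph S g2).coe)
    (hroot : ((T ⟨g, self_mem_extCone S g⟩ : (extConeSubgraph S g2).verts) : G) = g2)
    (hcone : ∀ x : (extConeSubgraph S g).verts,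
      ((x : G) ∈ coneSet S g ↔ ((T x : (extConeSubgraph S g2).verts) : G) ∈ coneSet S g2))
    {h : G} (hv : h ∈ (extConeSubgraph S g).verts)
    (hadj : (cayley S).Adj g h) (hincr : wordLength S h = wordLength S g + 1) :
    (cayley S).Adj g2 ((T ⟨h, hv⟩ : (extConeSubgraph S g2).verts) : G) ∧
    wordLength S ((T ⟨h, hv⟩ : (extConeSubgraph S g2).verts) : G) = wordLength S g2 + 1 ∧
    StrongEquiv S h ((T ⟨h, hv⟩ : (extConeSubgraph S g2).verts) : G) := by
  obtain ⟨hadj2, hincr2, hkc⟩ := step_incr hgen T hroot hcone hv hadj hincr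
  refine ⟨hadj2, hincr2, ?_⟩
  have hroot' := hroot_symm T hroot
  have hcone' := hcone_symm T hcone
  set k : G := ((T ⟨h, hv⟩ : (extConeSubgraph S g2).verts) : G) with hk
  have hkv : k ∈ (extConeSubgraph S g2).verts := (T ⟨h, hv⟩).2
  have hsy : T.symm ⟨k, hkv⟩ = ⟨h, hv⟩ := T.symm_apply_apply ⟨h, hv⟩
  have hsyv : ((T.symm ⟨k, hkv⟩ : (extConeSubgraph S g).verts) : G) = h :=
    congrArg Subtype.val hsy
  have hhc : h ∈ coneSet S g := adj_incr_mem_cone hadj hincr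
  have B1 : (extConeSubgraph S h).verts ⊆ (extConeSubgraph S g).verts :=
    (extCone_mono hgen hhc).1
  have B1' : (extConeSubgraph S k).verts ⊆ (extConeSubgraph S g2).verts :=
    (extCone_mono hgen hkc).1
  have stepV' : ∀ (x : G) (hxv : x ∈ (extConeSubgraph S g2).verts),
      x ∈ (extConeSubgraph S k).verts →
      ((T.symm ⟨x, hxv⟩ : (extConeSubgraph S g).verts) : G) ∈ (extConeSubgraph S h).verts := by
    intro x hxv hx
    have := step_verts hgen T.symm hroot' hcone' hkv hadj2 hincr2 hxv hx
    rwa [hsyv] at this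
  have stepC' : ∀ (x : G) (hxv : x ∈ (extConeSubgraph S g2).verts),
      x ∈ coneSet S k →
      ((T.symm ⟨x, hxv⟩ : (extConeSubgraph S g).verts) : G) ∈ coneSet S h := by
    intro x hxv hx
    have := step_cone hgen T.symm hroot' hcone' hkv hadj2 hincr2 hxv hx
    rwa [hsyv] at this
  have stepA' : ∀ (x y : G) (hxv : x ∈ (extConeSubgraph S g2).verts)
      (hyv : y ∈ (extConeSubgraph S g2).verts), (extConeSubgraph S k).Adj x y →
      (extConeSubgraph S h).Adj ((T.symm ⟨x, hxv⟩ : (extConeSubgraph S g).verts) : G)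
        ((T.symm ⟨y, hyv⟩ : (extConeSubgraph S g).verts) : G) := by
    intro x y hxv hyv hxy
    have := step_adj hgen T.symm hroot' hcone' hkv hadj2 hincr2 hxv hyv hxy
    rwa [hsyv] at this
  have unval : ∀ (x : (extConeSubgraph S h).verts)
      (p : ((T ⟨(x : G), B1 x.2⟩ : (extConeSubgraph S g2).verts) : G) ∈
        (extConeSubgraph S g2).verts),
      ((T.symm ⟨((T ⟨(x : G), B1 x.2⟩ : (extConeSubgraph S g2).verts) : G), p⟩ :
        (extConeSubgraph S g).verts) : G) = (x : G) := by
    intro x p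
    show ((T.symm (T ⟨(x : G), B1 x.2⟩) : (extConeSubgraph S g).verts) : G) = (x : G)
    rw [T.symm_apply_apply]
  have unval2 : ∀ (y : (extConeSubgraph S k).verts)
      (p : ((T.symm ⟨(y : G), B1' y.2⟩ : (extConeSubgraph S g).verts) : G) ∈
        (extConeSubgraph S g).verts),
      ((T ⟨((T.symm ⟨(y : G), B1' y.2⟩ : (extConeSubgraph S g).verts) : G), p⟩ :
        (extConeSubgraph S g2).verts) : G) = (y : G) := by
    intro y p
    show ((T (T.symm ⟨(y : G), B1' y.2⟩) : (extConeSubgraph S g2).verts) : G) = (y : G)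
    rw [T.apply_symm_apply]
  let F : (extConeSubgraph S h).verts → (extConeSubgraph S k).verts :=
    fun x => ⟨_, step_verts hgen T hroot hcone hv hadj hincr (B1 x.2) x.2⟩
  let Fi : (extConeSubgraph S k).verts → (extConeSubgraph S h).verts :=
    fun y => ⟨_, stepV' (y : G) (B1' y.2) y.2⟩
  have hleft : ∀ x, Fi (F x) = x := by
    intro x
    exact Subtype.ext (unval x _)
  have hright : ∀ y, F (Fi y) = y := by
    intro y
    exact Subtype.ext (unval2 y _)
  have hFA : ∀ a b : (extConeSubgraph S h).verts,
      (extConeSubgraph S h).Adj (a : G) (b : G) →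
      (extConeSubgraph S k).Adj ((F a : (extConeSubgraph S k).verts) : G)
        ((F b : (extConeSubgraph S k).verts) : G) := by
    intro a b hab
    exact step_adj hgen T hroot hcone hv hadj hincr (B1 a.2) (B1 b.2) hab
  have hFA' : ∀ a b : (extConeSubgraph S h).verts,
      (extConeSubgraph S k).Adj ((F a : (extConeSubgraph S k).verts) : G)
        ((F b : (extConeSubgraph S k).verts) : G) →
      (extConeSubgraph S h).Adj (a : G) (b : G) := by
    intro a b hab
    have h2 := stepA' ((F a : (extConeSubgraph S k).verts) : G)
      ((F b : (extConeSubgraph S k).verts) : G) (B1' (F a).2) (B1' (F b).2) hab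
    have hva : ((T.symm ⟨((F a : (extConeSubgraph S k).verts) : G), B1' (F a).2⟩ :
        (extConeSubgraph S g).verts) : G) = (a : G) := unval a _
    have hvb : ((T.symm ⟨((F b : (extConeSubgraph S k).verts) : G), B1' (F b).2⟩ :
        (extConeSubgraph S g).verts) : G) = (b : G) := unval b _
    rwa [hva, hvb] at h2
  refine ⟨⟨Equiv.mk F Fi hleft hright, ?_⟩, ?_, ?_⟩
  · intro a b
    exact ⟨hFA' a b, hFA a b⟩
  · rfl
  · intro x
    constructor
    · intro hx
      exact step_cone hgen T hroot hcone hv hadj hincr (B1 x.2) hx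
    · intro hx
      have h2 := stepC' ((F x : (extConeSubgraph S k).verts) : G) (B1' (F x).2) hx
      have hvx : ((T.symm ⟨((F x : (extConeSubgraph S k).verts) : G), B1' (F x).2⟩ :
          (extConeSubgraph S g).verts) : G) = (x : G) := unval x _
      rwa [hvx] at h2

end Assemble
section Roundtrip

variable {S : Set G}

lemma iso_roundtrip_val {g g2 : G}
    (T : (extConeSubgraph S g).coe ≃g (extConeSubgraph S g2).coe) {x : G}
    (p : x ∈ (extConeSubgraph S g).verts)
    (p2 : ((T ⟨x, p⟩ : (extConeSubgraph S g2).verts) : G) ∈ (extConeSubgraph S g2).verts) :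
    ((T.symm ⟨((T ⟨x, p⟩ : (extConeSubgraph S g2).verts) : G), p2⟩ :
      (extConeSubgraph S g).verts) : G) = x := by
  rw [show (⟨((T ⟨x, p⟩ : (extConeSubgraph S g2).verts) : G), p2⟩ :
      (extConeSubgraph S g2).verts) = T ⟨x, p⟩ from rfl, T.symm_apply_apply]

lemma iso_roundtrip_val2 {g g2 : G}
    (T : (extConeSubgraph S g).coe ≃g (extConeSubgraph S g2).coe) {x : G}
    (p : x ∈ (extConeSubgraph S g2).verts)
    (p2 : ((T.symm ⟨x, p⟩ : (extConeSubgraph S g).verts) : G) ∈ (extConeSubgraph S g).verts) :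
    ((T ⟨((T.symm ⟨x, p⟩ : (extConeSubgraph S g).verts) : G), p2⟩ :
      (extConeSubgraph S g2).verts) : G) = x := by
  rw [show (⟨((T.symm ⟨x, p⟩ : (extConeSubgraph S g).verts) : G), p2⟩ :
      (extConeSubgraph S g).verts) = T.symm ⟨x, p⟩ from rfl, T.apply_symm_apply]

end Roundtrip
section Invariance

variable {S : Set G}

lemma neighborSet_finite (hS : S.Finite) (g : G) : {h | (cayley S).Adj g h}.Finite := by
  apply Set.Finite.subset ((hS.union hS.inv).image (fun s => s * g))
  intro h hadj
  exact ⟨h * g⁻¹, (id hadj : g ≠ h ∧ h * g⁻¹ ∈ S ∪ S⁻¹).2, by group⟩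

lemma adj_translate {g g2 h : G} (hadj : (cayley S).Adj g h) :
    (cayley S).Adj g2 (h * g⁻¹ * g2) := by
  obtain ⟨hne, hm⟩ : g ≠ h ∧ h * g⁻¹ ∈ S ∪ S⁻¹ := hadj
  show g2 ≠ h * g⁻¹ * g2 ∧ _
  constructor
  · intro he
    have h1 : (1 : G) * g2 = (h * g⁻¹) * g2 := by rw [one_mul]; exact he
    have h2 := mul_right_cancel h1
    have h3 : h = g := by rw [← mul_inv_eq_one]; exact h2.symm
    exact hne h3.symm
  · have : (h * g⁻¹ * g2) * g2⁻¹ = h * g⁻¹ := by group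
    rw [this]; exact hm

lemma nb_card_eq (g g2 : G) :
    {h | (cayley S).Adj g h}.ncard = {h | (cayley S).Adj g2 h}.ncard := by
  rw [← Nat.card_coe_set_eq, ← Nat.card_coe_set_eq]
  apply Nat.card_congr
  refine Equiv.mk (fun h => ⟨(h : G) * g⁻¹ * g2, adj_translate h.2⟩)
    (fun h => ⟨(h : G) * g2⁻¹ * g, adj_translate h.2⟩) ?_ ?_
  · intro h; exact Subtype.ext (by group)
  · intro h; exact Subtype.ext (by group)

lemma nonDec_eq (hgen : Subgroup.closure S = ⊤) (g : G) :
    {h | (cayley S).Adj g h ∧ wordLength S g ≠ wordLength S h + 1} =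
    {h | (extConeSubgraph S g).Adj g h} := by
  ext h
  constructor
  · rintro ⟨hadj, hne⟩
    have h1 := wordLength_le_adj hgen hadj
    have h2 := wordLength_le_adj hgen hadj.symm
    by_cases hcase : wordLength S h = wordLength S g + 1
    · exact ⟨hadj, Or.inl ⟨self_mem_coneSet S g, adj_incr_mem_cone hadj hcase⟩⟩
    · have heq : wordLength S g = wordLength S h := by omega
      exact ⟨hadj, Or.inr ⟨heq, Or.inl (self_mem_coneSet S g)⟩⟩
  · rintro ⟨hadj, hcl | ⟨ht, _⟩⟩
    · have hc : wordLength S h = wordLength S g + (cayley S).dist g h := hcl.2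
      have hd : (cayley S).dist g h = 1 := SimpleGraph.dist_eq_one_iff_adj.mpr hadj
      exact ⟨hadj, by omega⟩
    · exact ⟨hadj, by omega⟩

lemma subadj_root_card {g g2 : G}
    (T : (extConeSubgraph S g).coe ≃g (extConeSubgraph S g2).coe)
    (hroot : ((T ⟨g, self_mem_extCone S g⟩ : (extConeSubgraph S g2).verts) : G) = g2) :
    {h | (extConeSubgraph S g).Adj g h}.ncard = {h | (extConeSubgraph S g2).Adj g2 h}.ncard := by
  rw [← Nat.card_coe_set_eq, ← Nat.card_coe_set_eq]
  apply Nat.card_congr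
  have hroot' := hroot_symm T hroot
  have hTg : T ⟨g, self_mem_extCone S g⟩ = ⟨g2, self_mem_extCone S g2⟩ := Subtype.ext hroot
  have hTg' : T.symm ⟨g2, self_mem_extCone S g2⟩ = ⟨g, self_mem_extCone S g⟩ :=
    Subtype.ext hroot'
  have fwd : ∀ (h : G) (hadj : (extConeSubgraph S g).Adj g h),
      (extConeSubgraph S g2).Adj g2
        ((T ⟨h, (extConeSubgraph S g).edge_vert hadj.symm⟩ : (extConeSubgraph S g2).verts) : G) := by
    intro h hadj
    have e : ((extConeSubgraph S g).coe).Adj ⟨g, self_mem_extCone S g⟩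
      ⟨h, (extConeSubgraph S g).edge_vert hadj.symm⟩ := hadj
    have e2 := T.map_adj_iff.mpr e
    rw [hTg] at e2
    exact e2
  have bwd : ∀ (h : G) (hadj : (extConeSubgraph S g2).Adj g2 h),
      (extConeSubgraph S g).Adj g
        ((T.symm ⟨h, (extConeSubgraph S g2).edge_vert hadj.symm⟩ :
          (extConeSubgraph S g).verts) : G) := by
    intro h hadj
    have e : ((extConeSubgraph S g2).coe).Adj ⟨g2, self_mem_extCone S g2⟩
      ⟨h, (extConeSubgraph S g2).edge_vert hadj.symm⟩ := hadj
    have e2 := T.symm.map_adj_iff.mpr e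
    rw [hTg'] at e2
    exact e2
  exact Equiv.mk
    (fun h => ⟨_, fwd (h : G) h.2⟩)
    (fun h => ⟨_, bwd (h : G) h.2⟩)
    (fun h => Subtype.ext (iso_roundtrip_val T _ _))
    (fun h => Subtype.ext (iso_roundtrip_val2 T _ _))

lemma mval_invariant (hS : S.Finite) (hgen : Subgroup.closure S = ⊤) {g g2 : G}
    (hse : StrongEquiv S g g2) : mval S g = mval S g2 := by
  obtain ⟨T, hroot, hcone⟩ := hse
  have key : ∀ g' : G, mval S g' + {h | (extConeSubgraph S g').Adj g' h}.ncard =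
      {h | (cayley S).Adj g' h}.ncard := by
    intro g'
    rw [← nonDec_eq hgen g']
    have hNb := neighborSet_finite hS g'
    have hDec : {h | (cayley S).Adj g' h ∧ wordLength S g' = wordLength S h + 1}.Finite :=
      hNb.subset (fun h hh => hh.1)
    have hND : {h | (cayley S).Adj g' h ∧ wordLength S g' ≠ wordLength S h + 1}.Finite :=
      hNb.subset (fun h hh => hh.1)
    have hdisj : Disjoint {h | (cayley S).Adj g' h ∧ wordLength S g' = wordLength S h + 1}
        {h | (cayley S).Adj g' h ∧ wordLength S g' ≠ wordLength S h + 1} := by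
      rw [Set.disjoint_left]
      rintro h ⟨_, he⟩ ⟨_, hne⟩
      exact hne he
    have := Set.ncard_union_eq hdisj hDec hND
    rw [show {h | (cayley S).Adj g' h ∧ wordLength S g' = wordLength S h + 1} ∪
        {h | (cayley S).Adj g' h ∧ wordLength S g' ≠ wordLength S h + 1} =
        {h | (cayley S).Adj g' h} from by ext h; by_cases hc : wordLength S g' = wordLength S h + 1 <;> simp [hc]] at this
    exact this.symm
  have k1 := key g
  have k2 := key g2
  have k3 := nb_card_eq (S := S) g g2
  have k4 := subadj_root_card T hroot
  omega

lemma nval_invariant (hgen : Subgroup.closure S = ⊤) {g g2 : G}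
    (hse : StrongEquiv S g g2) (z : G) : nval S g z = nval S g2 z := by
  obtain ⟨T, hroot, hcone⟩ := hse
  have hroot' := hroot_symm T hroot
  have hcone' := hcone_symm T hcone
  unfold nval
  rw [← Nat.card_coe_set_eq, ← Nat.card_coe_set_eq]
  apply Nat.card_congr
  exact Equiv.mk
    (fun h => ⟨((T ⟨(h : G), cone_mem_verts (adj_incr_mem_cone h.2.1 h.2.2.1)⟩ :
        (extConeSubgraph S g2).verts) : G), by
      obtain ⟨a, b, c⟩ := strong_step hgen T hroot hcone
        (cone_mem_verts (adj_incr_mem_cone h.2.1 h.2.2.1)) h.2.1 h.2.2.1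
      exact ⟨a, b, strongEquiv_trans (strongEquiv_symm c) h.2.2.2⟩⟩)
    (fun h => ⟨((T.symm ⟨(h : G), cone_mem_verts (adj_incr_mem_cone h.2.1 h.2.2.1)⟩ :
        (extConeSubgraph S g).verts) : G), by
      obtain ⟨a, b, c⟩ := strong_step hgen T.symm hroot' hcone'
        (cone_mem_verts (adj_incr_mem_cone h.2.1 h.2.2.1)) h.2.1 h.2.2.1
      exact ⟨a, b, strongEquiv_trans (strongEquiv_symm c) h.2.2.2⟩⟩)
    (fun h => Subtype.ext (iso_roundtrip_val T _ _))
    (fun h => Subtype.ext (iso_roundtrip_val2 T _ _))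

end Invariance
section Count

variable {S : Set G}

lemma ball_finite (hS : S.Finite) (hgen : Subgroup.closure S = ⊤) :
    ∀ n : ℕ, {g : G | wordLength S g ≤ n}.Finite := by
  intro n
  induction n with
  | zero =>
    apply Set.Finite.subset (Set.finite_singleton 1)
    intro g hg
    obtain ⟨w, hw, hl, hp⟩ := wordLength_spec hgen g
    have h0 : wordLength S g = 0 := Nat.le_zero.mp hg
    rw [h0] at hl
    have hwnil : w = [] := List.length_eq_zero_iff.mp hl
    rw [hwnil] at hp
    simp at hp
    simp [← hp]
  | succ n ih =>
    apply Set.Finite.subset (ih.union (Set.Finite.image2 (· * ·) (hS.union hS.inv) ih))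
    intro g hg
    obtain ⟨w, hw, hl, hp⟩ := wordLength_spec hgen g
    by_cases hc : wordLength S g ≤ n
    · exact Or.inl hc
    · have hlen : w.length = n + 1 := by
        have : wordLength S g ≤ n + 1 := hg
        omega
      cases w with
      | nil => simp at hlen
      | cons a t =>
        refine Or.inr (Set.mem_image2.mpr ⟨a, hw a List.mem_cons_self, t.prod, ?_, ?_⟩)
        · show wordLength S t.prod ≤ n
          have := wordLength_le (fun x hx => hw x (List.mem_cons_of_mem a hx)) t.prod rfl
          simp only [List.length_cons] at hlen
          omega
        · rw [← hp]; simp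

lemma sphere_finite (hS : S.Finite) (hgen : Subgroup.closure S = ⊤) (n : ℕ) :
    {g : G | wordLength S g = n}.Finite :=
  (ball_finite hS hgen n).subset (fun g hg => le_of_eq hg)

lemma ncard_graph_fst {α β : Type*} {A : Set α} {F : α → Set β} {m : ℕ}
    (hfin : ∀ a ∈ A, (F a).Finite) (hm : ∀ a ∈ A, (F a).ncard = m) :
    {p : α × β | p.1 ∈ A ∧ p.2 ∈ F p.1}.ncard = m * A.ncard := by
  rw [← Nat.card_coe_set_eq, ← Nat.card_coe_set_eq]
  have e1 : {p : α × β | p.1 ∈ A ∧ p.2 ∈ F p.1} ≃ (Σ a : A, ↥(F (a : α))) :=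
    { toFun := fun p => ⟨⟨p.val.1, p.prop.1⟩, ⟨p.val.2, p.prop.2⟩⟩
      invFun := fun s => ⟨(s.1.1, s.2.1), ⟨s.1.2, s.2.2⟩⟩
      left_inv := fun p => rfl
      right_inv := fun s => rfl }
  have e2 : (Σ a : A, ↥(F (a : α))) ≃ A × Fin m := by
    refine (Equiv.sigmaCongrRight (fun a => ?_)).trans (Equiv.sigmaEquivProd A (Fin m))
    haveI : Finite ↥(F (a : α)) := (hfin _ a.2).to_subtype
    exact Finite.equivFinOfCardEq (by rw [Nat.card_coe_set_eq]; exact hm _ a.2)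
  rw [Nat.card_congr (e1.trans e2), Nat.card_prod]
  simp [Nat.card_eq_fintype_card, Nat.mul_comm]

lemma ncard_graph_snd {α β : Type*} {A : Set β} {F : β → Set α} {m : ℕ}
    (hfin : ∀ a ∈ A, (F a).Finite) (hm : ∀ a ∈ A, (F a).ncard = m) :
    {p : α × β | p.2 ∈ A ∧ p.1 ∈ F p.2}.ncard = m * A.ncard := by
  have : {p : α × β | p.2 ∈ A ∧ p.1 ∈ F p.2} =
      (fun q : β × α => (q.2, q.1)) '' {p : β × α | p.1 ∈ A ∧ p.2 ∈ F p.1} := by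
    ext p
    constructor
    · intro hp; exact ⟨(p.2, p.1), hp, rfl⟩
    · rintro ⟨q, hq, rfl⟩; exact hq
  rw [this, Set.ncard_image_of_injective _ (fun q q' h => by
    have h1 := congrArg Prod.fst h
    have h2 := congrArg Prod.snd h
    exact Prod.ext h2 h1)]
  exact ncard_graph_fst hfin hm

lemma ncard_biUnion_finset {ι β : Type*} (s : Finset ι) (F : ι → Set β)
    (hfin : ∀ i, (F i).Finite) (hdisj : ∀ i j, i ≠ j → Disjoint (F i) (F j)) :
    (⋃ i ∈ s, F i).ncard = ∑ i ∈ s, (F i).ncard := by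
  classical
  induction s using Finset.induction with
  | empty => simp
  | @insert a s ha ih =>
    have hfin2 : (⋃ i ∈ s, F i).Finite := by
      apply Set.Finite.biUnion s.finite_toSet (fun i _ => hfin i)
    have hdisj2 : Disjoint (F a) (⋃ i ∈ s, F i) := by
      simp only [Set.disjoint_iUnion_right]
      intro i hi
      exact hdisj a i (fun he => ha (he ▸ hi))
    rw [Finset.set_biUnion_insert, Finset.sum_insert ha,
      Set.ncard_union_eq hdisj2 (hfin a) hfin2, ih]

lemma ncard_iUnion_fin {β : Type*} {k : ℕ} (F : Fin k → Set β) (hfin : ∀ i, (F i).Finite)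
    (hdisj : ∀ i j, i ≠ j → Disjoint (F i) (F j)) :
    (⋃ i, F i).ncard = ∑ i, (F i).ncard := by
  have := ncard_biUnion_finset Finset.univ F hfin hdisj
  simpa using this

end Count
/-- Cannon's recursion: if the Cayley graph has finitely many extended cone types
`t₀,…,t_q` (with `t₀` the type of `C̄(1)`), and `a n j` counts the elements of length `n`
of extended cone type `t_j`, then `m_j · a_{n,j} = Σᵢ n_{i,j} · a_{n-1,i}` for `n > 0`, `j ≠ 0`. -/
theorem cannon_recursion (S : Set G) (hS : S.Finite) (hgen : Subgroup.closure S = ⊤)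
    (q : ℕ) (reps : Fin (q + 1) → G) (h0 : reps 0 = 1)
    (hcover : ∀ g : G, ∃ j, StrongEquiv S g (reps j))
    (hdistinct : ∀ i j, StrongEquiv S (reps i) (reps j) → i = j)
    (a : ℕ → Fin (q + 1) → ℕ)
    (ha : ∀ n j, a n j = Set.ncard {g : G | wordLength S g = n ∧ StrongEquiv S g (reps j)})
    (n : ℕ) (hn : 0 < n) (j : Fin (q + 1)) (hj : j ≠ 0) :
    mval S (reps j) * a n j = ∑ i, nval S (reps i) (reps j) * a (n - 1) i := by
  classical
  set E : Set (G × G) := {p : G × G | (cayley S).Adj p.1 p.2 ∧ wordLength S p.1 = n ∧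
    wordLength S p.2 = n - 1 ∧ StrongEquiv S p.1 (reps j)} with hE
  have hL : E.ncard = mval S (reps j) * a n j := by
    have hEeq : E = {p : G × G |
        p.1 ∈ {g : G | wordLength S g = n ∧ StrongEquiv S g (reps j)} ∧
        p.2 ∈ (fun g => {h : G | (cayley S).Adj g h ∧
          wordLength S g = wordLength S h + 1}) p.1} := by
      ext p
      simp only [hE, Set.mem_setOf_eq]
      constructor
      · rintro ⟨h1, h2, h3, h4⟩
        exact ⟨⟨h2, h4⟩, h1, by omega⟩
      · rintro ⟨⟨h2, h4⟩, h1, h5⟩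
        exact ⟨h1, h2, by omega, h4⟩
    have hcount := ncard_graph_fst (A := {g : G | wordLength S g = n ∧ StrongEquiv S g (reps j)})
      (F := fun g => {h : G | (cayley S).Adj g h ∧ wordLength S g = wordLength S h + 1})
      (m := mval S (reps j))
      (fun g _ => (neighborSet_finite hS g).subset (fun h hh => hh.1))
      (fun g hg => (mval_invariant hS hgen hg.2 : mval S g = mval S (reps j)))
    rw [hEeq, hcount, ha n j]
  have hR : E.ncard = ∑ i, nval S (reps i) (reps j) * a (n - 1) i := by
    set Ei : Fin (q + 1) → Set (G × G) := fun i => {p : G × G |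
      p.2 ∈ {h : G | wordLength S h = n - 1 ∧ StrongEquiv S h (reps i)} ∧
      p.1 ∈ (fun h => {g : G | (cayley S).Adj h g ∧ wordLength S g = wordLength S h + 1 ∧
        StrongEquiv S g (reps j)}) p.2} with hEi
    have hunion : E = ⋃ i, Ei i := by
      ext p
      simp only [Set.mem_iUnion, hE, hEi, Set.mem_setOf_eq]
      constructor
      · rintro ⟨h1, h2, h3, h4⟩
        obtain ⟨i, hi⟩ := hcover p.2
        exact ⟨i, ⟨h3, hi⟩, h1.symm, by omega, h4⟩
      · rintro ⟨i, ⟨h3, hi⟩, h1, h5, h4⟩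
        exact ⟨h1.symm, by omega, h3, h4⟩
    have hfinEi : ∀ i, (Ei i).Finite := by
      intro i
      apply Set.Finite.subset ((sphere_finite hS hgen n).prod (sphere_finite hS hgen (n - 1)))
      rintro p ⟨⟨h3, _⟩, _, h5, _⟩
      exact ⟨by show wordLength S p.1 = n; omega, h3⟩
    have hdisjEi : ∀ i i', i ≠ i' → Disjoint (Ei i) (Ei i') := by
      intro i i' hne
      rw [Set.disjoint_left]
      rintro p ⟨⟨_, hi⟩, _⟩ ⟨⟨_, hi'⟩, _⟩
      exact hne (hdistinct i i' (strongEquiv_trans (strongEquiv_symm hi) hi'))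
    have hcard : ∀ i, (Ei i).ncard = nval S (reps i) (reps j) * a (n - 1) i := by
      intro i
      have hcnt := ncard_graph_snd
        (A := {h : G | wordLength S h = n - 1 ∧ StrongEquiv S h (reps i)})
        (F := fun h => {g : G | (cayley S).Adj h g ∧ wordLength S g = wordLength S h + 1 ∧
          StrongEquiv S g (reps j)})
        (m := nval S (reps i) (reps j))
        (fun h _ => (neighborSet_finite hS h).subset (fun g hg => hg.1))
        (fun h hh => (nval_invariant hgen hh.2 (reps j) :
          nval S h (reps j) = nval S (reps i) (reps j)))
      rw [hEi, hcnt, ha (n - 1) i]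
    rw [hunion, ncard_iUnion_fin Ei hfinEi hdisjEi]
    exact Finset.sum_congr rfl (fun i _ => hcard i)
  rw [← hL]
  exact hR
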